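/- Let {(η_k),(ξ_k)} be a solution of η_k = ξ_k η_{k-1} on a compact group G whose tail σ-field F^η_{-∞} = ⋂_k σ(η_m : m ≤ k) is trivial. Then the law of (η_k) is an extremal point of the convex set P_μ of laws of solutions. -/

import Mathlib

open MeasureTheory ProbabilityTheory

/-- The σ-field generated by the variables `f m` for `m ≥ k`; since the index `m : ℕ`
encodes the time `-m ∈ -ℕ`, this is the past `σ(f_t : t ≤ -k)`. -/
def pastSigma {G Ω : Type*} [MeasurableSpace G] (f : ℕ → Ω → G) (k : ℕ) :
    MeasurableSpace Ω :=
  ⨆ m, ⨆ _ : k ≤ m, MeasurableSpace.comap (f m) inferInstance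

/-- A solution of the stochastic equation `η_k = ξ_k η_{k-1}` (`k ∈ -ℕ`) with noise law
`μ = (μ_k)`: both processes are measurable, the equation holds a.s., each `ξ_k` is
independent of the past `σ(η_m : m ≤ k-1)`, and `ξ_k` has law `μ_k`.
The index `k : ℕ` encodes the time `-k`, so time `k - 1` is encoded by `k + 1`. -/
def IsSolution {G Ω : Type*} [Group G] [MeasurableSpace G] [MeasurableSpace Ω]
    (P : Measure Ω) (μk : ℕ → Measure G) (η ξ : ℕ → Ω → G) : Prop :=
  (∀ k, Measurable (η k)) ∧ (∀ k, Measurable (ξ k)) ∧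
  (∀ k, η k =ᵐ[P] fun x => ξ k x * η (k + 1) x) ∧
  (∀ k, Indep (MeasurableSpace.comap (ξ k) inferInstance) (pastSigma η (k + 1)) P) ∧
  (∀ k, P.map (ξ k) = μk k)
open scoped ENNReal

/-- The set `P_μ` of laws on `G^{-ℕ}` of processes `(η_k)` arising from solutions of
`η_k = ξ_k η_{k-1}` with noise law `μ = (μ_k)`. -/
def solutionLaws {G : Type*} [Group G] [MeasurableSpace G] (μk : ℕ → Measure G) :
    Set (Measure (ℕ → G)) :=
  { Q | ∃ (Ω : Type) (_ : MeasurableSpace Ω) (P : Measure Ω) (η ξ : ℕ → Ω → G),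
      IsProbabilityMeasure P ∧ IsSolution P μk η ξ ∧
      Q = P.map (fun x (k : ℕ) => η k x) }

set_option linter.unusedSectionVars false
set_option maxHeartbeats 1000000

open Filter

namespace ExtremalAux

/-- shift of a sequence by `j` -/
def shf {α : Type*} (j : ℕ) (y : ℕ → α) : ℕ → α := fun i => y (i + j)

/-- prepend an element to a sequence -/
def cns {α : Type*} (a : α) (y : ℕ → α) : ℕ → α := fun i => Nat.casesOn i a y

lemma shf_zero {α : Type*} (y : ℕ → α) : shf 0 y = y := rfl

lemma shf_shf {α : Type*} (a b : ℕ) (y : ℕ → α) : shf a (shf b y) = shf (a + b) y := by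
  funext i; simp [shf, Nat.add_assoc]

lemma shf_eq_cns {α : Type*} (j : ℕ) (y : ℕ → α) :
    shf j y = cns (y j) (shf (j + 1) y) := by
  funext i
  cases i with
  | zero => show y (0 + j) = y j; rw [Nat.zero_add]
  | succ n => show y (n + 1 + j) = y (n + (j + 1)); congr 1; omega

lemma measurable_shf {α : Type*} [MeasurableSpace α] (j : ℕ) :
    Measurable (shf (α := α) j) :=
  measurable_pi_lambda _ fun i => measurable_pi_apply (i + j)

lemma measurable_cns {α : Type*} [MeasurableSpace α] :
    Measurable (fun p : α × (ℕ → α) => cns p.1 p.2) := by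
  apply measurable_pi_lambda
  intro i
  cases i with
  | zero => exact measurable_fst
  | succ n => exact (measurable_pi_apply n).comp measurable_snd

variable {G : Type*} [Group G] [TopologicalSpace G] [IsTopologicalGroup G]
  [CompactSpace G] [T2Space G] [SecondCountableTopology G]
  [MeasurableSpace G] [BorelSpace G]

/-- one-step averaging of `φ` over the first coordinate, using noise law `μ` -/
noncomputable def stepK (μ : Measure G) (φ : (ℕ → G) → ℝ≥0∞) : (ℕ → G) → ℝ≥0∞ :=
  fun y => ∫⁻ u, φ (cns (u * y 0) y) ∂μ

/-- iterated averaging -/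
noncomputable def iterK (μk : ℕ → Measure G) (φ : (ℕ → G) → ℝ≥0∞) : ℕ → (ℕ → G) → ℝ≥0∞
  | 0 => φ
  | j + 1 => stepK (μk j) (iterK μk φ j)

lemma measurable_stepK (μ : Measure G) [SFinite μ] {φ : (ℕ → G) → ℝ≥0∞}
    (hφ : Measurable φ) : Measurable (stepK μ φ) := by
  have h1 : Measurable fun p : G × (ℕ → G) => (p.1 * p.2 0, p.2) :=
    by fun_prop
  have h : Measurable fun p : G × (ℕ → G) => φ (cns (p.1 * p.2 0) p.2) :=
    hφ.comp (measurable_cns.comp h1)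
  exact h.lintegral_prod_left'

lemma measurable_iterK (μk : ℕ → Measure G) (hμ : ∀ i, IsProbabilityMeasure (μk i))
    {φ : (ℕ → G) → ℝ≥0∞} (hφ : Measurable φ) : ∀ j, Measurable (iterK μk φ j)
  | 0 => hφ
  | j + 1 => by
    haveI := hμ j
    exact measurable_stepK (μk j) (measurable_iterK μk hμ hφ j)



section LemA

variable {Ω' : Type*} [MeasurableSpace Ω'] (P' : Measure Ω') [IsProbabilityMeasure P']
  (μk : ℕ → Measure G) (η' ξ' : ℕ → Ω' → G)

lemma prob_mu (hs : IsSolution P' μk η' ξ') (i : ℕ) : IsProbabilityMeasure (μk i) :=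
  (hs.2.2.2.2 i) ▸ Measure.isProbabilityMeasure_map (hs.2.1 i).aemeasurable

/-- The one-step Markov property of the law of a solution. -/
lemma lemA (hs : IsSolution P' μk η' ξ') (j : ℕ) (φ χ : (ℕ → G) → ℝ≥0∞)
    (hφ : Measurable φ) (hχ : Measurable χ) :
    ∫⁻ y, φ (shf j y) * χ (shf (j + 1) y) ∂(P'.map (fun x (k : ℕ) => η' k x)) =
      ∫⁻ y, stepK (μk j) φ (shf (j + 1) y) * χ (shf (j + 1) y)
        ∂(P'.map (fun x (k : ℕ) => η' k x)) := by
  obtain ⟨hη, hξ, heq, hind, hlaw⟩ := hs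
  haveI : IsProbabilityMeasure (μk j) :=
    (hlaw j) ▸ Measure.isProbabilityMeasure_map (hξ j).aemeasurable
  set m : Ω' → ℕ → G := fun x k => η' k x with hm_def
  have hm : Measurable m := measurable_pi_lambda _ fun k => hη k
  set W : Ω' → ℕ → G := fun x => shf (j + 1) (m x) with hW_def
  have hW : Measurable W := (measurable_shf (j + 1)).comp hm
  haveI : IsProbabilityMeasure (P'.map W) := Measure.isProbabilityMeasure_map hW.aemeasurable
  have hstep : Measurable (stepK (μk j) φ) := measurable_stepK _ hφ
  have hf1 : Measurable fun y : ℕ → G => φ (shf j y) * χ (shf (j + 1) y) :=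
    (hφ.comp (measurable_shf j)).mul (hχ.comp (measurable_shf (j + 1)))
  have hf2 : Measurable fun y : ℕ → G => stepK (μk j) φ (shf (j + 1) y) * χ (shf (j + 1) y) :=
    (hstep.comp (measurable_shf (j + 1))).mul (hχ.comp (measurable_shf (j + 1)))
  rw [lintegral_map hf1 hm, lintegral_map hf2 hm]
  -- the function F on the product space
  set F : G × (ℕ → G) → ℝ≥0∞ := fun p => φ (cns (p.1 * p.2 0) p.2) * χ p.2 with hF_def
  have hpair1 : Measurable fun p : G × (ℕ → G) => (p.1 * p.2 0, p.2) := by fun_prop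
  have hF : Measurable F :=
    (hφ.comp (measurable_cns.comp hpair1)).mul (hχ.comp measurable_snd)
  -- rewrite the integrand a.e.
  have hW0 : ∀ x, W x 0 = η' (j + 1) x := by
    intro x; show m x (0 + (j + 1)) = η' (j + 1) x; rw [Nat.zero_add]
  have hkey : ∀ x, shf j (m x) = cns (η' j x) (W x) := fun x => shf_eq_cns j (m x)
  have hae : (fun x => φ (shf j (m x)) * χ (shf (j + 1) (m x)))
      =ᵐ[P'] fun x => F (ξ' j x, W x) := by
    filter_upwards [heq j] with x hx
    rw [hkey x, hx, hF_def]
    simp only []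
    rw [hW0 x]
  rw [lintegral_congr_ae hae]
  have hpair : Measurable fun x => (ξ' j x, W x) := (hξ j).prodMk hW
  rw [← lintegral_map hF hpair]
  -- independence gives the product structure of the joint law
  have hWle : MeasurableSpace.comap W inferInstance ≤ pastSigma η' (j + 1) := by
    have hpi : (inferInstance : MeasurableSpace (ℕ → G)) =
        ⨆ i, MeasurableSpace.comap (fun y : ℕ → G => y i) inferInstance := rfl
    rw [hpi, MeasurableSpace.comap_iSup]
    apply iSup_le
    intro i
    rw [MeasurableSpace.comap_comp]
    exact le_iSup_of_le (i + (j + 1)) (le_iSup_of_le (Nat.le_add_left _ _) le_rfl)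
  have hip : IndepFun (ξ' j) W P' := by
    rw [IndepFun_iff_Indep]
    exact indep_of_indep_of_le_right (hind j) hWle
  have hmap := (indepFun_iff_map_prod_eq_prod_map_map (hξ j).aemeasurable hW.aemeasurable).mp hip
  rw [hmap, hlaw j, lintegral_prod_symm F hF.aemeasurable]
  have hin : ∀ w, (∫⁻ u, F (u, w) ∂(μk j)) = stepK (μk j) φ w * χ w := by
    intro w
    have hp : Measurable fun u : G => (u * w 0, w) :=
      (measurable_id.mul_const _).prodMk measurable_const
    have hmw : Measurable fun u : G => φ (cns (u * w 0) w) :=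
      hφ.comp (measurable_cns.comp hp)
    show (∫⁻ u, φ (cns (u * w 0) w) * χ w ∂(μk j)) = _
    exact lintegral_mul_const _ hmw
  rw [lintegral_congr hin, lintegral_map (f := fun a => stepK (μk j) φ a * χ a) (hstep.mul hχ) hW]

/-- Iterated Markov property. -/
lemma chainA (hs : IsSolution P' μk η' ξ') (φ : (ℕ → G) → ℝ≥0∞) (hφ : Measurable φ) :
    ∀ (k : ℕ) (χ : (ℕ → G) → ℝ≥0∞), Measurable χ →
      ∫⁻ y, φ y * χ (shf k y) ∂(P'.map (fun x (l : ℕ) => η' l x)) =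
        ∫⁻ y, iterK μk φ k (shf k y) * χ (shf k y) ∂(P'.map (fun x (l : ℕ) => η' l x)) := by
  intro k
  induction k with
  | zero => intro χ hχ; rfl
  | succ k ih =>
    intro χ hχ
    have h1 : ∀ y : ℕ → G, χ (shf (k + 1) y) = (χ ∘ shf 1) (shf k y) := by
      intro y
      show χ (shf (k + 1) y) = χ (shf 1 (shf k y))
      rw [shf_shf, Nat.add_comm 1 k]
    calc ∫⁻ y, φ y * χ (shf (k + 1) y) ∂(P'.map (fun x (l : ℕ) => η' l x))
        = ∫⁻ y, φ y * (χ ∘ shf 1) (shf k y) ∂(P'.map (fun x (l : ℕ) => η' l x)) := by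
          exact lintegral_congr fun y => by rw [h1 y]
      _ = ∫⁻ y, iterK μk φ k (shf k y) * (χ ∘ shf 1) (shf k y)
            ∂(P'.map (fun x (l : ℕ) => η' l x)) :=
          ih (χ ∘ shf 1) (hχ.comp (measurable_shf 1))
      _ = ∫⁻ y, iterK μk φ k (shf k y) * χ (shf (k + 1) y)
            ∂(P'.map (fun x (l : ℕ) => η' l x)) :=
          lintegral_congr fun y => by rw [h1 y]
      _ = ∫⁻ y, stepK (μk k) (iterK μk φ k) (shf (k + 1) y) * χ (shf (k + 1) y)
            ∂(P'.map (fun x (l : ℕ) => η' l x)) :=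
          lemA P' μk η' ξ' hs k (iterK μk φ k) χ
            (measurable_iterK μk (prob_mu P' μk η' ξ' hs) hφ k) hχ

end LemA

section Cyl

/-- cylinder set over coordinates `0,…,N` -/
def cyl {α : Type*} (t : ℕ → Set α) (N : ℕ) : Set (ℕ → α) := {y | ∀ i ≤ N, y i ∈ t i}

variable {α : Type*} [MeasurableSpace α]

lemma measurableSet_cyl {t : ℕ → Set α} (ht : ∀ i, MeasurableSet (t i)) (N : ℕ) :
    MeasurableSet (cyl t N) := by
  have : cyl t N = ⋂ i, ⋂ _ : i ≤ N, (fun y : ℕ → α => y i) ⁻¹' (t i) := by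
    ext y; simp [cyl]
  rw [this]
  exact MeasurableSet.iInter fun i => MeasurableSet.iInter fun _ =>
    (measurable_pi_apply i) (ht i)

/-- the collection of cylinder sets -/
def cylSets (α : Type*) [MeasurableSpace α] : Set (Set (ℕ → α)) :=
  {s | ∃ (N : ℕ) (t : ℕ → Set α), (∀ i, MeasurableSet (t i)) ∧ s = cyl t N}

lemma isPiSystem_cylSets : IsPiSystem (cylSets α) := by
  rintro s ⟨N₁, t₁, ht₁, rfl⟩ s' ⟨N₂, t₂, ht₂, rfl⟩ -
  refine ⟨max N₁ N₂, fun i =>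
    (if i ≤ N₁ then t₁ i else Set.univ) ∩ (if i ≤ N₂ then t₂ i else Set.univ),
    fun i => by
      show MeasurableSet ((if i ≤ N₁ then t₁ i else Set.univ) ∩
        (if i ≤ N₂ then t₂ i else Set.univ))
      exact MeasurableSet.inter (by split_ifs with h; exacts [ht₁ i, .univ])
        (by split_ifs with h; exacts [ht₂ i, .univ]), ?_⟩
  ext y
  simp only [cyl, Set.mem_inter_iff, Set.mem_setOf_eq]
  constructor
  · rintro ⟨h1, h2⟩ i _
    constructor
    · split_ifs with h
      · exact h1 i h
      · trivial
    · split_ifs with h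
      · exact h2 i h
      · trivial
  · intro h
    constructor
    · intro i hi
      have := (h i (le_trans hi (le_max_left _ _))).1
      rwa [if_pos hi] at this
    · intro i hi
      have := (h i (le_trans hi (le_max_right _ _))).2
      rwa [if_pos hi] at this

lemma generateFrom_cylSets :
    (MeasurableSpace.pi : MeasurableSpace (ℕ → α)) = .generateFrom (cylSets α) := by
  apply le_antisymm
  · have hpi : (MeasurableSpace.pi : MeasurableSpace (ℕ → α)) =
        ⨆ i, MeasurableSpace.comap (fun y : ℕ → α => y i) inferInstance := rfl
    rw [hpi]
    apply iSup_le
    intro i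
    rw [← measurable_iff_comap_le]
    intro t ht
    apply MeasurableSpace.measurableSet_generateFrom
    refine ⟨i, fun n => if n = i then t else Set.univ, fun n => ?_, ?_⟩
    · show MeasurableSet (if n = i then t else Set.univ)
      split_ifs <;> simp [ht]
    · ext y
      simp only [cyl, Set.mem_preimage, Set.mem_setOf_eq]
      constructor
      · intro hy n _
        split_ifs with h
        · rw [h]; exact hy
        · trivial
      · intro h
        have := h i le_rfl
        rwa [if_pos rfl] at this
  · apply MeasurableSpace.generateFrom_le
    rintro s ⟨N, t, ht, rfl⟩
    exact measurableSet_cyl ht N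

end Cyl

section Main

variable {Ω : Type*} [MeasurableSpace Ω]

lemma law_eq_of_ac (P : Measure Ω) [IsProbabilityMeasure P]
    (μk : ℕ → Measure G) (η ξ : ℕ → Ω → G)
    (hsol : IsSolution P μk η ξ)
    (htail : ∀ s, MeasurableSet[⨅ k, pastSigma η k] s → P s = 0 ∨ P s = 1)
    (P₁ : Measure (ℕ → G)) (hP₁ : P₁ ∈ solutionLaws μk)
    (hac : P₁ ≪ P.map (fun x (k : ℕ) => η k x)) :
    P₁ = P.map (fun x (k : ℕ) => η k x) := by
  obtain ⟨Ω₁, mΩ₁, P₁', η₁, ξ₁, hprob₁, hsol₁, hrep₁⟩ := hP₁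
  haveI := hprob₁
  have hm : Measurable (fun x (k : ℕ) => η k x) := measurable_pi_lambda _ fun k => hsol.1 k
  have hm₁ : Measurable (fun x (k : ℕ) => η₁ k x) := measurable_pi_lambda _ fun k => hsol₁.1 k
  set Q : Measure (ℕ → G) := P.map (fun x (k : ℕ) => η k x) with hQ_def
  haveI : IsProbabilityMeasure Q := Measure.isProbabilityMeasure_map hm.aemeasurable
  haveI : IsProbabilityMeasure P₁ := by
    rw [hrep₁]; exact Measure.isProbabilityMeasure_map hm₁.aemeasurable
  haveI : (MeasureTheory.ae Q).NeBot := ae_neBot.mpr (IsProbabilityMeasure.ne_zero Q)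
  have hμ : ∀ i, IsProbabilityMeasure (μk i) := prob_mu P μk η ξ hsol
  set D : (ℕ → G) → ℝ≥0∞ := P₁.rnDeriv Q with hD_def
  have hDmeas : Measurable D := Measure.measurable_rnDeriv P₁ Q
  have hwdD : Q.withDensity D = P₁ := Measure.withDensity_rnDeriv_eq P₁ Q hac
  have hDj_meas : ∀ j, Measurable fun y => iterK μk D j (shf j y) :=
    fun j => (measurable_iterK μk hμ hDmeas j).comp (measurable_shf j)
  -- The density is, up to null sets, measurable w.r.t. each past σ-field.
  have claim : ∀ j, Q.withDensity (fun y => iterK μk D j (shf j y)) = P₁ := by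
    intro j
    induction j with
    | zero => exact hwdD
    | succ j ih =>
      have main : ∀ (t : ℕ → Set G), (∀ i, MeasurableSet (t i)) → ∀ M, j + 1 ≤ M →
          ∫⁻ y in cyl t M, iterK μk D (j + 1) (shf (j + 1) y) ∂Q = P₁ (cyl t M) := by
        intro t ht M hM
        set b0 : (ℕ → G) → ℝ≥0∞ := (cyl t j).indicator 1 with hb0_def
        have hb0 : Measurable b0 := measurable_one.indicator (measurableSet_cyl ht j)
        set γs : Set (ℕ → G) := {y | ∀ i, i + (j + 1) ≤ M → y i ∈ t (i + (j + 1))}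
          with hγs_def
        have hγsm : MeasurableSet γs := by
          have : γs = ⋂ i, ⋂ _ : i + (j + 1) ≤ M,
              (fun y : ℕ → G => y i) ⁻¹' t (i + (j + 1)) := by
            ext y; simp [hγs_def]
          rw [this]
          exact MeasurableSet.iInter fun i => MeasurableSet.iInter fun _ =>
            (measurable_pi_apply i) (ht _)
        set γ : (ℕ → G) → ℝ≥0∞ := γs.indicator 1 with hγ_def
        have hγ : Measurable γ := measurable_one.indicator hγsm
        have hsplit : ∀ y : ℕ → G, (cyl t M).indicator (1 : (ℕ → G) → ℝ≥0∞) y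
            = b0 y * γ (shf (j + 1) y) := by
          intro y
          by_cases hy : y ∈ cyl t M
          · have h1 : y ∈ cyl t j := fun i hi => hy i (by omega)
            have h2 : shf (j + 1) y ∈ γs := fun i hi => hy (i + (j + 1)) hi
            rw [Set.indicator_of_mem hy, hb0_def, hγ_def,
              Set.indicator_of_mem h1, Set.indicator_of_mem h2]
            simp
          · rw [Set.indicator_of_notMem hy]
            simp only [cyl, Set.mem_setOf_eq] at hy
            push_neg at hy
            obtain ⟨i, hiM, hyi⟩ := hy
            by_cases hij : i ≤ j
            · have hb : y ∉ cyl t j := fun h => hyi (h i hij)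
              rw [hb0_def]
              simp [Set.indicator_of_notMem hb]
            · have hg : shf (j + 1) y ∉ γs := by
                intro h
                have h2 := h (i - (j + 1)) (by omega)
                simp only [shf] at h2
                have h3 : i - (j + 1) + (j + 1) = i := by omega
                rw [h3] at h2
                exact hyi h2
              rw [hγ_def]
              simp [Set.indicator_of_notMem hg]
        have hiterb := measurable_iterK μk hμ hb0
        have hiterD := measurable_iterK μk hμ hDmeas
        have hLHS : ∫⁻ y in cyl t M, iterK μk D (j + 1) (shf (j + 1) y) ∂Q
            = ∫⁻ y, iterK μk b0 (j + 1) (shf (j + 1) y) *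
                ((fun z => γ z * iterK μk D (j + 1) z) (shf (j + 1) y)) ∂Q := by
          rw [← lintegral_indicator (measurableSet_cyl ht M)]
          have e1 : ∀ y, (cyl t M).indicator (fun y => iterK μk D (j + 1) (shf (j + 1) y)) y
              = b0 y * ((fun z => γ z * iterK μk D (j + 1) z) (shf (j + 1) y)) := by
            intro y
            have e0 : (cyl t M).indicator (fun y => iterK μk D (j + 1) (shf (j + 1) y)) y
                = (cyl t M).indicator 1 y * iterK μk D (j + 1) (shf (j + 1) y) := by
              by_cases hy : y ∈ cyl t M <;> simp [hy]
            rw [e0, hsplit y, mul_assoc]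
          rw [lintegral_congr e1]
          exact chainA P μk η ξ hsol b0 hb0 (j + 1) (fun z => γ z * iterK μk D (j + 1) z)
            (hγ.mul (hiterD (j + 1)))
        have hRHS : P₁ (cyl t M)
            = ∫⁻ y, iterK μk D (j + 1) (shf (j + 1) y) *
                ((fun z => iterK μk b0 (j + 1) z * γ z) (shf (j + 1) y)) ∂Q := by
          have s1 : P₁ (cyl t M) = ∫⁻ y, b0 y * γ (shf (j + 1) y) ∂P₁ := by
            rw [← lintegral_indicator_one (measurableSet_cyl ht M)]
            exact lintegral_congr hsplit
          have s2 : ∫⁻ y, b0 y * γ (shf (j + 1) y) ∂P₁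
              = ∫⁻ y, iterK μk b0 (j + 1) (shf (j + 1) y) * γ (shf (j + 1) y) ∂P₁ := by
            rw [hrep₁]
            exact chainA P₁' μk η₁ ξ₁ hsol₁ b0 hb0 (j + 1) γ hγ
          have s3 : ∫⁻ y, iterK μk b0 (j + 1) (shf (j + 1) y) * γ (shf (j + 1) y) ∂P₁
              = ∫⁻ y, iterK μk D j (shf j y) *
                  ((fun z => iterK μk b0 (j + 1) z * γ z) (shf (j + 1) y)) ∂Q := by
            have hg : Measurable fun y : ℕ → G =>
                iterK μk b0 (j + 1) (shf (j + 1) y) * γ (shf (j + 1) y) :=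
              ((hiterb (j + 1)).comp (measurable_shf (j + 1))).mul
                (hγ.comp (measurable_shf (j + 1)))
            rw [← ih, lintegral_withDensity_eq_lintegral_mul Q (hDj_meas j) hg]
            exact lintegral_congr fun y => rfl
          have s4 : ∫⁻ y, iterK μk D j (shf j y) *
                  ((fun z => iterK μk b0 (j + 1) z * γ z) (shf (j + 1) y)) ∂Q
              = ∫⁻ y, iterK μk D (j + 1) (shf (j + 1) y) *
                  ((fun z => iterK μk b0 (j + 1) z * γ z) (shf (j + 1) y)) ∂Q :=
            lemA P μk η ξ hsol j (iterK μk D j) (fun z => iterK μk b0 (j + 1) z * γ z)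
              (hiterD j) ((hiterb (j + 1)).mul hγ)
          rw [s1, s2, s3, s4]
        rw [hLHS, hRHS]
        exact lintegral_congr fun y => by dsimp only; ring
      have keyN : ∀ (t : ℕ → Set G), (∀ i, MeasurableSet (t i)) → ∀ N,
          ∫⁻ y in cyl t N, iterK μk D (j + 1) (shf (j + 1) y) ∂Q = P₁ (cyl t N) := by
        intro t ht N
        set M := max N (j + 1) with hM_def
        set t' : ℕ → Set G := fun i => if i ≤ N then t i else Set.univ with ht'_def
        have ht' : ∀ i, MeasurableSet (t' i) := fun i => by
          rw [ht'_def]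
          show MeasurableSet (if i ≤ N then t i else Set.univ)
          split_ifs
          exacts [ht i, .univ]
        have hcyl : cyl t' M = cyl t N := by
          ext y
          simp only [cyl, Set.mem_setOf_eq, ht'_def]
          constructor
          · intro h i hi
            have := h i (le_trans hi (le_max_left _ _))
            rwa [if_pos hi] at this
          · intro h i _
            show y i ∈ if i ≤ N then t i else Set.univ
            split_ifs with h'
            · exact h i h'
            · trivial
        rw [← hcyl]
        exact main t' ht' M (le_max_right _ _)
      have huniv : Q.withDensity (fun y => iterK μk D (j + 1) (shf (j + 1) y)) Set.univ
          = P₁ Set.univ := by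
        have h := keyN (fun _ => Set.univ) (fun _ => .univ) 0
        have hcu : cyl (fun _ => (Set.univ : Set G)) 0 = Set.univ := by ext y; simp [cyl]
        rw [hcu] at h
        rw [withDensity_apply _ MeasurableSet.univ]
        simpa using h
      haveI : IsFiniteMeasure (Q.withDensity (fun y => iterK μk D (j + 1) (shf (j + 1) y))) :=
        ⟨by rw [huniv]; exact measure_lt_top _ _⟩
      refine ext_of_generate_finite (cylSets G) generateFrom_cylSets isPiSystem_cylSets ?_ huniv
      rintro s ⟨N, t, ht, rfl⟩
      rw [withDensity_apply _ (measurableSet_cyl ht N)]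
      exact keyN t ht N
  -- hence each iterate agrees a.e. with the density
  have hDj_ae : ∀ j, (fun y => iterK μk D j (shf j y)) =ᵐ[Q] D := by
    intro j
    refine ae_eq_of_forall_setLIntegral_eq_of_sigmaFinite (hDj_meas j) hDmeas ?_
    intro s hs _
    rw [← withDensity_apply _ hs, ← withDensity_apply _ hs, claim j, hwdD]
  -- the limsup of the iterates: a tail-measurable version of the density
  set D' : (ℕ → G) → ℝ≥0∞ := fun y => Filter.limsup (fun j => iterK μk D j (shf j y))
    Filter.atTop with hD'_def
  have hD'_ae : D' =ᵐ[Q] D := by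
    have h := ae_all_iff.mpr hDj_ae
    filter_upwards [h] with y hy
    have he : (fun j => iterK μk D j (shf j y)) = fun _ => D y := funext fun j => hy j
    rw [hD'_def]
    show Filter.limsup (fun j => iterK μk D j (shf j y)) Filter.atTop = D y
    rw [he, Filter.limsup_const]
  set Fco : ℕ → MeasurableSpace (ℕ → G) := pastSigma (fun n (y : ℕ → G) => y n) with hFco_def
  have hpi : (MeasurableSpace.pi : MeasurableSpace (ℕ → G)) =
      ⨆ i, MeasurableSpace.comap (fun y : ℕ → G => y i) inferInstance := rfl
  have hFle : ∀ k, Fco k ≤ MeasurableSpace.pi := fun k =>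
    iSup_le fun n => iSup_le fun _ => (measurable_pi_apply n).comap_le
  have hshf_meas : ∀ k j, k ≤ j → Measurable[Fco k] (shf (α := G) j) := by
    intro k j hkj
    refine measurable_iff_comap_le.mpr ?_
    rw [hpi, MeasurableSpace.comap_iSup]
    apply iSup_le
    intro i
    rw [MeasurableSpace.comap_comp]
    exact le_iSup_of_le (i + j) (le_iSup_of_le (by omega) le_rfl)
  have hDj_Fk : ∀ k j, k ≤ j → Measurable[Fco k] fun y => iterK μk D j (shf j y) :=
    fun k j hkj => (measurable_iterK μk hμ hDmeas j).comp (hshf_meas k j hkj)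
  have hD'_Fk : ∀ k, Measurable[Fco k] D' := by
    intro k
    have he : D' = fun y => Filter.limsup (fun j => iterK μk D (j + k) (shf (j + k) y))
        Filter.atTop := by
      funext y
      rw [hD'_def]
      exact (Filter.limsup_nat_add _ k).symm
    rw [he]
    exact Measurable.limsup fun j => hDj_Fk k (j + k) (Nat.le_add_left _ _)
  have hD'meas : Measurable D' := (hD'_Fk 0).mono (hFle 0) le_rfl
  have hD'tail : Measurable[⨅ k, Fco k] D' :=
    measurable_iff_comap_le.mpr (le_iInf fun k => (hD'_Fk k).comap_le)
  -- zero-one law transfer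
  have h01 : ∀ s : Set (ℕ → G), MeasurableSet[⨅ k, Fco k] s → Q s = 0 ∨ Q s = 1 := by
    intro s hs
    have hsall : ∀ k, MeasurableSet[Fco k] s := by
      rw [MeasurableSpace.measurableSet_iInf] at hs
      exact hs
    have hsm : MeasurableSet s := (hFle 0) s (hsall 0)
    rw [hQ_def, Measure.map_apply hm hsm]
    apply htail
    rw [MeasurableSpace.measurableSet_iInf]
    intro k
    have hle : MeasurableSpace.comap (fun x (n : ℕ) => η n x) (Fco k) ≤ pastSigma η k := by
      have h1 : Fco k = ⨆ n, ⨆ _ : k ≤ n,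
          MeasurableSpace.comap (fun y : ℕ → G => y n) inferInstance := rfl
      rw [h1, MeasurableSpace.comap_iSup]
      apply iSup_le
      intro n
      rw [MeasurableSpace.comap_iSup]
      apply iSup_le
      intro hkn
      rw [MeasurableSpace.comap_comp]
      exact le_iSup_of_le n (le_iSup_of_le hkn le_rfl)
    exact hle _ (MeasurableSpace.measurableSet_comap.mpr ⟨s, hsall k, rfl⟩)
  -- the density integrates to one
  have hintD : ∫⁻ y, D y ∂Q = 1 := by
    rw [hD_def, Measure.lintegral_rnDeriv hac, measure_univ]
  have hintD' : ∫⁻ y, D' y ∂Q = 1 := by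
    rw [lintegral_congr_ae hD'_ae, hintD]
  -- D' is a.e. equal to 1
  have hlt : Q {y | D' y < 1} = 0 := by
    have hsm1 : MeasurableSet {y | D' y < 1} := measurableSet_lt hD'meas measurable_const
    rcases h01 {y | D' y < 1} (hD'tail measurableSet_Iio) with h | h
    · exact h
    · exfalso
      have hae1 : ∀ᵐ y ∂Q, D' y < 1 := by
        apply ae_iff.mpr
        have hc : Q {y | D' y < 1}ᶜ = 0 := by
          have hcm := measure_compl hsm1 (measure_ne_top Q _)
          rw [h, measure_univ] at hcm
          simpa using hcm
        simpa [Set.compl_setOf] using hc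
      have hle1 : D' ≤ᵐ[Q] fun _ => 1 := hae1.mono fun y hyy => le_of_lt hyy
      have hsub := lintegral_sub hD'meas (by rw [hintD']; exact ENNReal.one_ne_top) hle1
      simp only [lintegral_const, measure_univ, mul_one, hintD', tsub_self] at hsub
      have hz := (lintegral_eq_zero_iff (measurable_const.sub hD'meas)).mp hsub
      obtain ⟨y, hy1, hy2⟩ := (hae1.and hz).exists
      exact absurd (tsub_eq_zero_iff_le.mp hy2) (not_le.mpr hy1)
  have hgt : Q {y | 1 < D' y} = 0 := by
    have hsm1 : MeasurableSet {y | 1 < D' y} := measurableSet_lt measurable_const hD'meas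
    rcases h01 {y | 1 < D' y} (hD'tail measurableSet_Ioi) with h | h
    · exact h
    · exfalso
      have hae1 : ∀ᵐ y ∂Q, 1 < D' y := by
        apply ae_iff.mpr
        have hc : Q {y | 1 < D' y}ᶜ = 0 := by
          have hcm := measure_compl hsm1 (measure_ne_top Q _)
          rw [h, measure_univ] at hcm
          simpa using hcm
        simpa [Set.compl_setOf] using hc
      have hge1 : (fun _ : ℕ → G => (1 : ℝ≥0∞)) ≤ᵐ[Q] D' := hae1.mono fun y hyy => le_of_lt hyy
      have hone_ne : ∫⁻ _, (1 : ℝ≥0∞) ∂Q ≠ ∞ := by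
        rw [lintegral_one, measure_univ]; exact ENNReal.one_ne_top
      have hsub := lintegral_sub measurable_const hone_ne hge1
      simp only [lintegral_const, measure_univ, mul_one, hintD', tsub_self] at hsub
      have hz := (lintegral_eq_zero_iff (hD'meas.sub measurable_const)).mp hsub
      obtain ⟨y, hy1, hy2⟩ := (hae1.and hz).exists
      exact absurd (tsub_eq_zero_iff_le.mp hy2) (not_le.mpr hy1)
  have hone : D' =ᵐ[Q] fun _ => 1 := by
    apply ae_iff.mpr
    refine measure_mono_null ?_ (measure_union_null hlt hgt)
    intro y hy
    rcases lt_or_gt_of_ne hy with h | h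
    · exact Or.inl h
    · exact Or.inr h
  have hDone : D =ᵐ[Q] fun _ => 1 := hD'_ae.symm.trans hone
  calc P₁ = Q.withDensity D := hwdD.symm
    _ = Q.withDensity (fun _ => 1) := withDensity_congr_ae hDone
    _ = Q := by
      rw [show (fun _ : ℕ → G => (1 : ℝ≥0∞)) = (1 : (ℕ → G) → ℝ≥0∞) from rfl, withDensity_one]

end Main

end ExtremalAux


/-- If the tail σ-field `F^η_{-∞} = ⋂_k σ(η_m : m ≤ k)` of a solution is trivial, then
the law of `(η_k)` is an extremal point of the convex set `P_μ` of laws of solutions. -/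
theorem extremal_of_tail_trivial
    {G : Type*} [Group G] [TopologicalSpace G] [IsTopologicalGroup G]
    [CompactSpace G] [T2Space G] [SecondCountableTopology G]
    [MeasurableSpace G] [BorelSpace G]
    {Ω : Type*} [MeasurableSpace Ω] (P : Measure Ω) [IsProbabilityMeasure P]
    (μk : ℕ → Measure G) (η ξ : ℕ → Ω → G)
    (hsol : IsSolution P μk η ξ)
    (htail : ∀ s, MeasurableSet[⨅ k, pastSigma η k] s → P s = 0 ∨ P s = 1) :
    ∀ P₁ ∈ solutionLaws μk, ∀ P₂ ∈ solutionLaws μk, ∀ c : ℝ≥0∞,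
      0 < c → c < 1 →
      P.map (fun x (k : ℕ) => η k x) = c • P₁ + (1 - c) • P₂ →
      P₁ = P.map (fun x (k : ℕ) => η k x) ∧ P₂ = P.map (fun x (k : ℕ) => η k x) := by
  intro P₁ hP₁ P₂ hP₂ c hc0 hc1 heq
  have hc1' : (1 : ℝ≥0∞) - c ≠ 0 := by
    simp only [ne_eq, tsub_eq_zero_iff_le]
    exact fun h => absurd hc1 (not_lt.mpr h)
  have key : ∀ s : Set (ℕ → G), (P.map (fun x (k : ℕ) => η k x)) s = 0 →
      P₁ s = 0 ∧ P₂ s = 0 := by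
    intro s hs
    rw [heq, Measure.add_apply, Measure.smul_apply, Measure.smul_apply,
      smul_eq_mul, smul_eq_mul] at hs
    obtain ⟨ha, hb⟩ := add_eq_zero.mp hs
    constructor
    · rcases mul_eq_zero.mp ha with h | h
      · exact absurd h (ne_of_gt hc0)
      · exact h
    · rcases mul_eq_zero.mp hb with h | h
      · exact absurd h hc1'
      · exact h
  have hac₁ : P₁ ≪ P.map (fun x (k : ℕ) => η k x) :=
    Measure.AbsolutelyContinuous.mk fun s _ hs => (key s hs).1
  have hac₂ : P₂ ≪ P.map (fun x (k : ℕ) => η k x) :=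
    Measure.AbsolutelyContinuous.mk fun s _ hs => (key s hs).2
  exact ⟨ExtremalAux.law_eq_of_ac P μk η ξ hsol htail P₁ hP₁ hac₁,
    ExtremalAux.law_eq_of_ac P μk η ξ hsol htail P₂ hP₂ hac₂⟩
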